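/- Let X and Y be real Banach spaces and let L : X → Y be a bounded linear Fredholm operator with dim ker L = d and dim(Y/range L) = e. Then there exist an open neighborhood 𝒰 of L in B(X,Y) and an infinitely Fréchet-differentiable map 𝒮 : 𝒰 → Hom(ker L, Y/range L) such that: (i) 𝒮(L) = 0; (ii) the Fréchet derivative d_L𝒮 : B(X,Y) → Hom(ker L, Y/range L) is surjective; and (iii) for every T ∈ 𝒰 one has (dim ker T = d and dim(Y/range T) = e) if and only if 𝒮(T) = 0. (Thus, near L, the stratum of Fredholm operators with kernel of dimension d and cokernel of dimension e is the zero level set of a smooth map into the de-dimensional space Hom(ker L, Y/range L) which is submersive at L.) -/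

import Mathlib

set_option synthInstance.maxHeartbeats 1000000
set_option maxHeartbeats 4000000

open ContinuousLinearMap

lemma aux_inverse_hasFDerivAt {E F : Type*} [NormedAddCommGroup E] [NormedSpace ℝ E]
    [NormedAddCommGroup F] [NormedSpace ℝ F] [CompleteSpace E] (e₀ : E ≃L[ℝ] F) :
    HasFDerivAt ContinuousLinearMap.inverse
      (-((compL ℝ F F E (e₀.symm : F →L[ℝ] E)).comp
        ((compL ℝ F E F).flip (e₀.symm : F →L[ℝ] E)))) (e₀ : E →L[ℝ] F) := by
  set D := -((compL ℝ F F E (e₀.symm : F →L[ℝ] E)).comp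
        ((compL ℝ F E F).flip (e₀.symm : F →L[ℝ] E))) with hDdef
  have hD : ∀ B : E →L[ℝ] F,
      D B = -((e₀.symm : F →L[ℝ] E).comp (B.comp (e₀.symm : F →L[ℝ] E))) := by
    intro B; ext x; simp [hDdef]
  have hfun : (ContinuousLinearMap.inverse : (E →L[ℝ] F) → (F →L[ℝ] E)) =
      (fun g : E →L[ℝ] E => g.comp (e₀.symm : F →L[ℝ] E)) ∘ Ring.inverse ∘
      (fun f : E →L[ℝ] F => (e₀.symm : F →L[ℝ] E).comp f) :=
    funext (inverse_eq_ringInverse e₀)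
  set O₂ : (E →L[ℝ] F) →L[ℝ] (E →L[ℝ] E) := compL ℝ E F E (e₀.symm : F →L[ℝ] E) with hO₂
  set O₁ : (E →L[ℝ] E) →L[ℝ] (F →L[ℝ] E) := (compL ℝ F E E).flip (e₀.symm : F →L[ℝ] E) with hO₁
  have hmid : O₂ ((e₀ : E →L[ℝ] F)) = (1 : E →L[ℝ] E) := by
    ext x; simp [hO₂, ContinuousLinearMap.one_def]
  have hinv : HasFDerivAt (Ring.inverse : (E →L[ℝ] E) → (E →L[ℝ] E))
      (-mulLeftRight ℝ (E →L[ℝ] E) 1 1) (O₂ ((e₀ : E →L[ℝ] F))) := by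
    rw [hmid]
    simpa using hasFDerivAt_ringInverse (1 : (E →L[ℝ] E)ˣ)
  have h₂ : HasFDerivAt (fun f : E →L[ℝ] F => O₂ f) O₂ (e₀ : E →L[ℝ] F) := O₂.hasFDerivAt
  have h₁ : HasFDerivAt (fun g : E →L[ℝ] E => O₁ g)
      O₁ (Ring.inverse (O₂ ((e₀ : E →L[ℝ] F)))) := O₁.hasFDerivAt
  have htot := h₁.comp (e₀ : E →L[ℝ] F) (hinv.comp (e₀ : E →L[ℝ] F) h₂)
  have heq : O₁.comp ((-mulLeftRight ℝ (E →L[ℝ] E) 1 1).comp O₂) = D := by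
    ext B x
    simp [hO₁, hO₂, hD B]
  rw [← heq]
  rw [hfun]; exact htot

/-- **Local structure of the Brill–Noether stratification of Fredholm operators.** -/
theorem stmt_2
    {X Y : Type*} [NormedAddCommGroup X] [NormedSpace ℝ X] [CompleteSpace X]
    [NormedAddCommGroup Y] [NormedSpace ℝ Y] [CompleteSpace Y]
    (L : X →L[ℝ] Y) (d e : ℕ)
    [FiniteDimensional ℝ (LinearMap.ker (L : X →ₗ[ℝ] Y))]
    [IsClosed ((LinearMap.range (L : X →ₗ[ℝ] Y) : Submodule ℝ Y) : Set Y)]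
    [FiniteDimensional ℝ (Y ⧸ LinearMap.range (L : X →ₗ[ℝ] Y))]
    (hd : Module.finrank ℝ (LinearMap.ker (L : X →ₗ[ℝ] Y)) = d)
    (he : Module.finrank ℝ (Y ⧸ LinearMap.range (L : X →ₗ[ℝ] Y)) = e) :
    ∃ (U : Set (X →L[ℝ] Y))
      (S : (X →L[ℝ] Y) → (LinearMap.ker (L : X →ₗ[ℝ] Y) →L[ℝ] Y ⧸ LinearMap.range (L : X →ₗ[ℝ] Y))),
      IsOpen U ∧ L ∈ U ∧ ContDiffOn ℝ (⊤ : ℕ∞) S U ∧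
      S L = 0 ∧
      Function.Surjective (fderiv ℝ S L) ∧
      ∀ T ∈ U,
        ((Module.rank ℝ (LinearMap.ker (T : X →ₗ[ℝ] Y)) = (d : Cardinal) ∧
          Module.rank ℝ (Y ⧸ LinearMap.range (T : X →ₗ[ℝ] Y)) = (e : Cardinal)) ↔ S T = 0) := by
  classical
  set K : Submodule ℝ X := LinearMap.ker (L : X →ₗ[ℝ] Y) with hKdef
  set R : Submodule ℝ Y := LinearMap.range (L : X →ₗ[ℝ] Y) with hRdef
  set V := Y ⧸ R with hVdef
  -- continuous projection onto the kernel
  obtain ⟨p, hp⟩ := Submodule.ClosedComplemented.of_finiteDimensional K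
  -- continuous linear section of the quotient map
  obtain ⟨j₀, hj₀⟩ := R.mkQ.exists_rightInverse_of_surjective
    (LinearMap.range_eq_top.mpr R.mkQ_surjective)
  set j : V →L[ℝ] Y := LinearMap.toContinuousLinearMap j₀ with hjdef
  have hj : ∀ v : V, R.mkQ (j v) = v := fun v => LinearMap.congr_fun hj₀ v
  -- the big operator family
  set A : (X →L[ℝ] Y) → (X × V) →L[ℝ] (Y × K) := fun T =>
    ((T.comp (fst ℝ X V)) + j.comp (snd ℝ X V)).prod (p.comp (fst ℝ X V)) with hAdef
  have hA_apply : ∀ T : X →L[ℝ] Y, ∀ x : X, ∀ v : V, A T (x, v) = (T x + j v, p x) :=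
    fun T x v => rfl
  -- A L is bijective
  have hker : LinearMap.ker ((A L) : (X × V) →ₗ[ℝ] (Y × K)) = ⊥ := by
    rw [LinearMap.ker_eq_bot']
    rintro ⟨x, v⟩ hm
    rw [ContinuousLinearMap.coe_coe, hA_apply] at hm
    have h1 : L x + j v = 0 := congrArg Prod.fst hm
    have h2 : p x = 0 := congrArg Prod.snd hm
    have hLxR : R.mkQ (L x) = 0 := (Submodule.Quotient.mk_eq_zero R).mpr ⟨x, rfl⟩
    have hv : v = 0 := by
      have := congrArg R.mkQ h1
      rw [map_add, hLxR, hj, map_zero, zero_add] at this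
      exact this
    have hLx : L x = 0 := by
      have := h1; rw [hv, map_zero, add_zero] at this; exact this
    have hxK : x ∈ K := LinearMap.mem_ker.mpr hLx
    have hx0 : x = 0 := by
      have := hp ⟨x, hxK⟩
      rw [h2] at this  -- p x = ⟨x,hxK⟩ but h2 : p x = 0
      exact congrArg Subtype.val this.symm
    rw [hx0, hv]
    rfl
  have hrange : LinearMap.range ((A L) : (X × V) →ₗ[ℝ] (Y × K)) = ⊤ := by
    rw [LinearMap.range_eq_top]
    rintro ⟨y, k⟩
    have hyR : y - j (R.mkQ y) ∈ R := by
      rw [← Submodule.Quotient.mk_eq_zero]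
      have : R.mkQ (y - j (R.mkQ y)) = 0 := by rw [map_sub, hj, sub_self]
      rwa [Submodule.mkQ_apply] at this
    obtain ⟨x', hx'⟩ := hyR
    refine ⟨(x' - ↑(p x') + ↑k, R.mkQ y), ?_⟩
    rw [ContinuousLinearMap.coe_coe, hA_apply]
    have hL1 : L ↑(p x') = 0 := (p x').2
    have hL2 : L (k : X) = 0 := k.2
    have hLx : L (x' - ↑(p x') + ↑k) = y - j (R.mkQ y) := by
      rw [map_add, map_sub, hL1, hL2, sub_zero, add_zero, ← ContinuousLinearMap.coe_coe, hx']
    have hpx : p (x' - ↑(p x') + ↑k) = k := by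
      rw [map_add, map_sub, hp (p x'), hp k, sub_self, zero_add]
    rw [hLx, hpx]
    ext <;> simp
  set e₀ : (X × V) ≃L[ℝ] (Y × K) := ContinuousLinearEquiv.ofBijective (A L) hker hrange
    with he₀def
  have he₀ : (e₀ : (X × V) →L[ℝ] (Y × K)) = A L := ContinuousLinearEquiv.coe_ofBijective _ _ _
  have he₀app : ∀ w : X × V, e₀ w = A L w := fun w => by rw [← he₀]; rfl
  have hALinv : (A L).IsInvertible := ⟨e₀, he₀⟩
  -- the open set and the map
  set U : Set (X →L[ℝ] Y) := {T | (A T).IsInvertible} with hUdef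
  set S : (X →L[ℝ] Y) → (K →L[ℝ] V) := fun T =>
    (snd ℝ X V).comp ((ContinuousLinearMap.inverse (A T)).comp (inr ℝ Y K)) with hSdef
  have hS_apply : ∀ T : X →L[ℝ] Y, ∀ k : K,
      S T k = ((ContinuousLinearMap.inverse (A T)) ((0 : Y), k)).2 := fun T k => rfl
  -- A as an affine map
  set Ψ := (compL ℝ (X × V) Y (Y × K) (inl ℝ Y K)).comp
      ((compL ℝ (X × V) X Y).flip (fst ℝ X V)) with hΨdef
  have hΨ_apply : ∀ T : X →L[ℝ] Y, ∀ x : X, ∀ v : V, Ψ T (x, v) = (T x, (0 : K)) :=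
    fun T x v => rfl
  have hAΨ : ∀ T : X →L[ℝ] Y, A T = Ψ T + A 0 := by
    intro T
    refine ContinuousLinearMap.ext fun m => ?_
    obtain ⟨x, v⟩ := m
    rw [ContinuousLinearMap.add_apply, hA_apply, hΨ_apply, hA_apply]
    simp [Prod.ext_iff]
  have hAfun : A = fun T => Ψ T + A 0 := funext hAΨ
  have hAcont : Continuous A := by
    rw [hAfun]; exact Ψ.continuous.add continuous_const
  have hUopen : IsOpen U := by
    have : U = A ⁻¹' (Set.range ((↑) : ((X × V) ≃L[ℝ] (Y × K)) → (X × V) →L[ℝ] (Y × K))) := rfl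
    rw [this]
    exact (ContinuousLinearEquiv.isOpen).preimage hAcont
  refine ⟨U, S, hUopen, hALinv, ?_, ?_, ?_, ?_⟩
  · -- smoothness
    intro T hT
    obtain ⟨eT, heT⟩ := hT
    have h1 : ContDiffAt ℝ (⊤ : ℕ∞) (ContinuousLinearMap.inverse :
        ((X × V) →L[ℝ] Y × K) → ((Y × K) →L[ℝ] X × V)) (A T) := by
      rw [← heT]; exact contDiffAt_map_inverse eT
    have h2 : ContDiff ℝ (⊤ : ℕ∞) A := by
      rw [hAfun]
      exact Ψ.contDiff.add contDiff_const
    have h3 : ContDiffAt ℝ (⊤ : ℕ∞)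
        (fun T' => ContinuousLinearMap.inverse (A T')) T := h1.comp T h2.contDiffAt
    have h5 : ContDiffAt ℝ (⊤ : ℕ∞)
        (fun T' => (ContinuousLinearMap.inverse (A T')).comp (inr ℝ Y K)) T :=
      h3.clm_comp contDiffAt_const
    have h6 : ContDiffAt ℝ (⊤ : ℕ∞) S T := contDiffAt_const.clm_comp h5
    exact h6.contDiffWithinAt
  · -- S L = 0
    ext k
    have h1 : A L ((k : X), (0 : V)) = ((0 : Y), k) := by
      rw [hA_apply]
      have hLk : L (k : X) = 0 := k.2
      rw [hLk, map_zero, add_zero, hp k]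
    have h2 : ContinuousLinearMap.inverse (A L) ((0 : Y), k) = ((k : X), (0 : V)) :=
      hALinv.inverse_apply_eq.mpr h1.symm
    rw [hS_apply, h2]
    simp
  · -- derivative surjective
    set Θ := (compL ℝ K (X × V) V (snd ℝ X V)).comp
        ((compL ℝ K (Y × K) (X × V)).flip (inr ℝ Y K)) with hΘdef
    have hΘ_apply : ∀ B : (Y × K) →L[ℝ] (X × V), ∀ k : K, Θ B k = (B ((0 : Y), k)).2 :=
      fun B k => rfl
    set Dinv := -((compL ℝ (Y × K) (Y × K) (X × V) (e₀.symm : (Y × K) →L[ℝ] (X × V))).comp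
        ((compL ℝ (Y × K) (X × V) (Y × K)).flip
          (e₀.symm : (Y × K) →L[ℝ] (X × V)))) with hDinvdef
    have hinvd' : HasFDerivAt ContinuousLinearMap.inverse Dinv (A L) := by
      have h := aux_inverse_hasFDerivAt e₀
      rw [← hDinvdef] at h
      rwa [he₀] at h
    have hAd : HasFDerivAt A Ψ L := by
      rw [hAfun]; exact (hasFDerivAt_add_const_iff (f := fun T => Ψ T) (A 0)).mpr Ψ.hasFDerivAt
    have hcomp : HasFDerivAt (fun T => ContinuousLinearMap.inverse (A T))
        (Dinv.comp Ψ) L := hinvd'.comp L hAd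
    have hSd : HasFDerivAt S (Θ.comp (Dinv.comp Ψ)) L := by
      have hSeq : S = fun T => Θ (ContinuousLinearMap.inverse (A T)) := rfl
      rw [hSeq]
      exact Θ.hasFDerivAt.comp L hcomp
    rw [hSd.fderiv]
    intro F
    refine ⟨-(j.comp (F.comp p)), ?_⟩
    ext k
    have h1k : e₀.symm ((0 : Y), k) = ((k : X), (0 : V)) := by
      rw [ContinuousLinearEquiv.symm_apply_eq, he₀app, hA_apply]
      have hLk : L (k : X) = 0 := k.2
      rw [hLk, map_zero, add_zero, hp k]
    have h2k : e₀.symm (-(j (F k)), (0 : K)) = ((0 : X), -(F k)) := by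
      rw [ContinuousLinearEquiv.symm_apply_eq, he₀app, hA_apply]
      rw [map_zero, map_neg, zero_add, map_zero]
    show (-(e₀.symm ((Ψ (-(j.comp (F.comp p)))) (e₀.symm ((0 : Y), k))))).2 = F k
    rw [h1k]
    have hΨv : Ψ (-(j.comp (F.comp p))) ((k : X), (0 : V)) = (-(j (F k)), (0 : K)) := by
      rw [hΨ_apply]
      simp [hp k]
    rw [hΨv, h2k]
    simp
  · -- stratum characterization
    intro T hT
    obtain ⟨eT, heT⟩ := hT
    have heTapp : ∀ w : X × V, eT w = A T w := fun w => by rw [← heT]; rfl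
    have hSTk : ∀ k : K, S T k = (eT.symm ((0 : Y), k)).2 := by
      intro k
      rw [hS_apply, ← heT, ContinuousLinearMap.inverse_equiv]
      rfl
    have hmem1 : ∀ x : X, T x = 0 →
        eT.symm ((0 : Y), p x) = (x, (0 : V)) := by
      intro x hx
      rw [ContinuousLinearEquiv.symm_apply_eq, heTapp, hA_apply, hx, map_zero, add_zero]
    have hmem2 : ∀ k : K, A T (eT.symm ((0 : Y), k)) = ((0 : Y), k) := fun k =>
      (heTapp _).symm.trans (eT.apply_symm_apply _)
    have hmem2' : ∀ k : K,
        T (eT.symm ((0 : Y), k)).1 + j (eT.symm ((0 : Y), k)).2 = 0 ∧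
        p (eT.symm ((0 : Y), k)).1 = k := by
      intro k
      have h := hmem2 k
      have h' : A T ((eT.symm ((0 : Y), k)).1, (eT.symm ((0 : Y), k)).2) = ((0 : Y), k) := by
        rw [Prod.mk.eta]; exact h
      rw [hA_apply] at h'
      exact ⟨congrArg Prod.fst h', congrArg Prod.snd h'⟩
    -- kernel equivalence
    have hf_mem : ∀ x : LinearMap.ker (T : X →ₗ[ℝ] Y), S T (p (x : X)) = 0 := by
      intro x
      have hx : T (x : X) = 0 := x.2
      rw [hSTk, hmem1 _ hx]
    set fker : (LinearMap.ker (T : X →ₗ[ℝ] Y)) →ₗ[ℝ] (LinearMap.ker ((S T) : K →ₗ[ℝ] V)) :=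
      { toFun := fun x => ⟨p (x : X), LinearMap.mem_ker.mpr (hf_mem x)⟩
        map_add' := fun a b => by ext; simp
        map_smul' := fun c a => by ext; simp } with hfkerdef
    have hfker_bij : Function.Bijective fker := by
      constructor
      · intro a b hab
        have h1 : p (a : X) = p (b : X) := congrArg Subtype.val hab
        have ha : (a : X) = (eT.symm ((0 : Y), p (a : X))).1 := by
          rw [hmem1 _ a.2]
        have hb : (b : X) = (eT.symm ((0 : Y), p (b : X))).1 := by
          rw [hmem1 _ b.2]
        ext
        rw [ha, hb, h1]
      · rintro ⟨k, hk⟩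
        have hk0 : S T k = 0 := hk
        have hT0 : T (eT.symm ((0 : Y), k)).1 = 0 := by
          have h := (hmem2' k).1
          have h2 : (eT.symm ((0 : Y), k)).2 = 0 := by rw [← hSTk k]; exact hk0
          rwa [h2, map_zero, add_zero] at h
        refine ⟨⟨(eT.symm ((0 : Y), k)).1, LinearMap.mem_ker.mpr hT0⟩, ?_⟩
        ext
        exact congrArg Subtype.val ((hmem2' k).2)
    have hrank1 : Module.rank ℝ (LinearMap.ker (T : X →ₗ[ℝ] Y)) = Module.rank ℝ (LinearMap.ker ((S T) : K →ₗ[ℝ] V)) :=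
      (LinearEquiv.ofBijective fker hfker_bij).rank_eq
    -- cokernel equivalence
    set φ : V →ₗ[ℝ] (Y ⧸ LinearMap.range (T : X →ₗ[ℝ] Y)) :=
      (LinearMap.range (T : X →ₗ[ℝ] Y)).mkQ ∘ₗ (j : V →ₗ[ℝ] Y) with hφdef
    have hφ_apply : ∀ v : V, φ v = (LinearMap.range (T : X →ₗ[ℝ] Y)).mkQ (j v) := fun v => rfl
    have hφsurj : Function.Surjective φ := by
      intro z
      obtain ⟨y, rfl⟩ := (LinearMap.range (T : X →ₗ[ℝ] Y)).mkQ_surjective z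
      refine ⟨(eT.symm (y, (0 : K))).2, ?_⟩
      have h := (heTapp _).symm.trans (eT.apply_symm_apply (y, (0 : K)))
      have h' : A T ((eT.symm (y, (0 : K))).1, (eT.symm (y, (0 : K))).2) = (y, (0 : K)) := by
        rw [Prod.mk.eta]; exact h
      rw [hA_apply] at h'
      have h1 : T (eT.symm (y, (0 : K))).1 + j (eT.symm (y, (0 : K))).2 = y :=
        congrArg Prod.fst h'
      have hTm : (LinearMap.range (T : X →ₗ[ℝ] Y)).mkQ (T (eT.symm (y, (0 : K))).1) = 0 :=
        (Submodule.Quotient.mk_eq_zero _).mpr ⟨_, rfl⟩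
      rw [hφ_apply]
      have := congrArg (LinearMap.range (T : X →ₗ[ℝ] Y)).mkQ h1
      rw [map_add, hTm, zero_add] at this
      exact this
    have hφker : LinearMap.ker φ = LinearMap.range ((S T) : K →ₗ[ℝ] V) := by
      ext v
      simp only [LinearMap.mem_ker, LinearMap.mem_range]
      constructor
      · intro hv
        have hjv : j v ∈ LinearMap.range (T : X →ₗ[ℝ] Y) := by
          rw [hφ_apply, Submodule.mkQ_apply, Submodule.Quotient.mk_eq_zero] at hv
          exact hv
        obtain ⟨x, hx⟩ := hjv
        have hA' : A T (x, -v) = ((0 : Y), p x) := by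
          rw [hA_apply, map_neg, ← hx, ContinuousLinearMap.coe_coe, add_neg_cancel]
        have hsym : eT.symm ((0 : Y), p x) = (x, -v) := by
          rw [ContinuousLinearEquiv.symm_apply_eq, heTapp]
          exact hA'.symm
        refine ⟨-(p x), ?_⟩
        rw [map_neg, ContinuousLinearMap.coe_coe, hSTk, hsym, neg_neg]
      · rintro ⟨k, rfl⟩
        have h1 := (hmem2' k).1
        have h2 : (eT.symm ((0 : Y), k)).2 = S T k := (hSTk k).symm
        rw [h2] at h1
        have hjv : j (S T k) = T (-(eT.symm ((0 : Y), k)).1) := by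
          rw [map_neg]
          exact eq_neg_of_add_eq_zero_left (by rwa [add_comm] at h1)
        rw [hφ_apply, ContinuousLinearMap.coe_coe, hjv, Submodule.mkQ_apply, Submodule.Quotient.mk_eq_zero]
        exact ⟨_, rfl⟩
    have hrank2 : Module.rank ℝ (Y ⧸ LinearMap.range (T : X →ₗ[ℝ] Y))
        = Module.rank ℝ (V ⧸ LinearMap.range ((S T) : K →ₗ[ℝ] V)) := by
      have e1 := φ.quotKerEquivOfSurjective hφsurj
      have e2 := Submodule.quotEquivOfEq _ _ hφker
      rw [← e1.rank_eq, e2.rank_eq]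
    constructor
    · rintro ⟨h1, -⟩
      have hr : Module.rank ℝ (LinearMap.ker ((S T) : K →ₗ[ℝ] V)) = (d : Cardinal) := by
        rw [← hrank1]; exact h1
      have hfr : Module.finrank ℝ (LinearMap.ker ((S T) : K →ₗ[ℝ] V)) = d := by
        have := Module.finrank_eq_rank ℝ (LinearMap.ker ((S T) : K →ₗ[ℝ] V))
        rw [hr] at this
        exact_mod_cast this
      have htop : LinearMap.ker ((S T) : K →ₗ[ℝ] V) = ⊤ :=
        Submodule.eq_top_of_finrank_eq (by rw [hfr, hd])
      ext k
      have hk : k ∈ LinearMap.ker ((S T) : K →ₗ[ℝ] V) := by rw [htop]; trivial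
      simpa using hk
    · intro h0
      constructor
      · rw [hrank1, h0]
        have hk0 : LinearMap.ker ((0 : K →L[ℝ] V) : K →ₗ[ℝ] V) = ⊤ := LinearMap.ker_zero
        rw [hk0]
        rw [rank_top ℝ K, ← hd, Module.finrank_eq_rank]
      · rw [hrank2, h0]
        have hr0 : LinearMap.range ((0 : K →L[ℝ] V) : K →ₗ[ℝ] V) = ⊥ := LinearMap.range_zero
        rw [hr0]
        have e3 := Submodule.quotEquivOfEqBot (⊥ : Submodule ℝ V) rfl
        rw [e3.rank_eq]
        rw [← he, Module.finrank_eq_rank]
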